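/- Let T be any candidate for an instance with S steps and let cnt be its counting run. Then for every chunk c and node n, cnt_S(c,n) equals the number of pairs (u, π) where (c,u) ∈ pre and π is a c-path in T from u to n all of whose steps are < S. Consequently, (c,n) ∈ V_S (the set-valued run) if and only if cnt_S(c,n) ≥ 1. -/

import Mathlib

/-- The set-valued run of a candidate `T`: `V_0 = pre`,
`V_{s+1} = V_s ∪ {(c,n') : ∃ n, (c,n) ∈ V_s ∧ (c,n,n',s) ∈ T}`. -/
def stepRun {G P S : ℕ} (pre : Set (Fin G × Fin P))
    (T : Finset (Fin G × Fin P × Fin P × Fin S)) : ℕ → Set (Fin G × Fin P)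
  | 0 => pre
  | s + 1 =>
      stepRun pre T s ∪
        {q | ∃ n, (q.1, n) ∈ stepRun pre T s ∧ ∃ h : s < S, (q.1, n, q.2, ⟨s, h⟩) ∈ T}

/-- `IsCPath T c u v l` : `l` is a `c`-path in `T` from `u` to `v`, encoded as the
list of its sends `(source, destination, step)`, with strictly increasing steps.
The empty path is allowed exactly when `u = v`. -/
def IsCPath {G P S : ℕ} (T : Finset (Fin G × Fin P × Fin P × Fin S)) (c : Fin G) :
    Fin P → Fin P → List (Fin P × Fin P × Fin S) → Prop
  | u, v, [] => u = v
  | u, v, e :: l =>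
      u = e.1 ∧ (c, e.1, e.2.1, e.2.2) ∈ T ∧ (∀ f ∈ l, e.2.2 < f.2.2) ∧
        IsCPath T c e.2.1 v l

open Classical in
/-- The counting run of a candidate: `cnt_0(c,n) = 1` iff `(c,n) ∈ pre`, and
`cnt_{s+1}(c,n) = cnt_s(c,n) + Σ_{n' : (c,n',n,s) ∈ T} cnt_s(c,n')`. -/
noncomputable def cntRun {G P S : ℕ} (pre : Set (Fin G × Fin P))
    (T : Finset (Fin G × Fin P × Fin P × Fin S)) : ℕ → Fin G → Fin P → ℕ
  | 0, c, n => if (c, n) ∈ pre then 1 else 0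
  | s + 1, c, n =>
      cntRun pre T s c n +
        if h : s < S then
          ∑ n' : Fin P, if (c, n', n, ⟨s, h⟩) ∈ T then cntRun pre T s c n' else 0
        else 0

open Classical

lemma isCPath_concat {G P S : ℕ} (T : Finset (Fin G × Fin P × Fin P × Fin S)) (c : Fin G)
    (e : Fin P × Fin P × Fin S) (l : List (Fin P × Fin P × Fin S)) (u v : Fin P) :
    IsCPath T c u v (l ++ [e]) ↔
      IsCPath T c u e.1 l ∧ (c, e.1, e.2.1, e.2.2) ∈ T ∧ e.2.1 = v ∧
        ∀ f ∈ l, f.2.2 < e.2.2 := by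
  induction l generalizing u with
  | nil =>
    simp only [List.nil_append, IsCPath, List.not_mem_nil, false_implies, implies_true,
      and_true, List.forall_mem_nil]
    tauto
  | cons a l ih =>
    simp only [List.cons_append, IsCPath, List.append_eq]
    rw [ih]
    constructor
    · rintro ⟨h1, h2, h3, h4, h5, h6, h7⟩
      refine ⟨⟨h1, h2, fun f hf => h3 f (List.mem_append_left _ hf), h4⟩, h5, h6, ?_⟩
      rintro f hf
      rcases List.mem_cons.1 hf with rfl | hf
      · exact h3 e (List.mem_append_right _ (List.mem_singleton_self e))
      · exact h7 f hf
    · rintro ⟨⟨h1, h2, h3, h4⟩, h5, h6, h7⟩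
      refine ⟨h1, h2, ?_, h4, h5, h6, fun f hf => h7 f (List.mem_cons_of_mem _ hf)⟩
      intro f hf
      rcases List.mem_append.1 hf with hf | hf
      · exact h3 f hf
      · rw [List.mem_singleton.1 hf]
        exact h7 a List.mem_cons_self

open Classical in
noncomputable def pathF {G P S : ℕ} (pre : Set (Fin G × Fin P))
    (T : Finset (Fin G × Fin P × Fin P × Fin S)) :
    ℕ → Fin G → Fin P → Finset (Fin P × List (Fin P × Fin P × Fin S))
  | 0, c, n => if (c, n) ∈ pre then {(n, [])} else ∅
  | s + 1, c, n =>
      pathF pre T s c n ∪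
        if h : s < S then
          (Finset.univ.filter fun n' => (c, n', n, ⟨s, h⟩) ∈ T).biUnion fun n' =>
            (pathF pre T s c n').image fun q => (q.1, q.2 ++ [(n', n, ⟨s, h⟩)])
        else ∅

lemma mem_pathF {G P S : ℕ} (pre : Set (Fin G × Fin P))
    (T : Finset (Fin G × Fin P × Fin P × Fin S)) (c : Fin G) :
    ∀ (s : ℕ) (n : Fin P) (q : Fin P × List (Fin P × Fin P × Fin S)),
      q ∈ pathF pre T s c n ↔
        (c, q.1) ∈ pre ∧ IsCPath T c q.1 n q.2 ∧ ∀ e ∈ q.2, (e.2.2 : ℕ) < s := by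
  intro s
  induction s with
  | zero =>
    intro n q
    obtain ⟨u, l⟩ := q
    constructor
    · intro hq
      simp only [pathF] at hq
      by_cases hp : (c, n) ∈ pre
      · rw [if_pos hp] at hq
        simp only [Finset.mem_singleton, Prod.mk.injEq] at hq
        obtain ⟨rfl, rfl⟩ := hq
        exact ⟨hp, rfl, by simp⟩
      · rw [if_neg hp] at hq
        exact absurd hq (Finset.notMem_empty _)
    · rintro ⟨h1, h2, h3⟩
      cases l with
      | nil =>
        have hu : u = n := h2
        subst hu
        simp only [pathF, if_pos h1, Finset.mem_singleton]
      | cons e t =>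
        exact absurd (h3 e List.mem_cons_self) (by simp)
  | succ s ih =>
    intro n q
    simp only [pathF, Finset.mem_union]
    by_cases h : s < S
    · simp only [dif_pos h, Finset.mem_biUnion, Finset.mem_filter, Finset.mem_univ, true_and,
        Finset.mem_image]
      constructor
      · rintro (hq | ⟨n', hT, p, hp, rfl⟩)
        · obtain ⟨h1, h2, h3⟩ := (ih n q).1 hq
          exact ⟨h1, h2, fun e he => Nat.lt_succ_of_lt (h3 e he)⟩
        · obtain ⟨h1, h2, h3⟩ := (ih n' p).1 hp
          refine ⟨h1, ?_, ?_⟩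
        
          · refine (isCPath_concat T c (n', n, ⟨s, h⟩) p.2 p.1 n).2 ⟨h2, hT, rfl, ?_⟩
            intro f hf
            rw [Fin.lt_def]
            exact h3 f hf
          · intro e he
            rcases List.mem_append.1 he with he | he
            · exact Nat.lt_succ_of_lt (h3 e he)
            · rw [List.mem_singleton.1 he]
              exact Nat.lt_succ_self s
      · rintro ⟨h1, h2, h3⟩
        obtain ⟨u, l⟩ := q
        rcases List.eq_nil_or_concat l with rfl | ⟨l', e, rfl⟩
        · left
          exact (ih n _).2 ⟨h1, h2, by simp⟩
        · simp only [List.concat_eq_append] at *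
          obtain ⟨hpath, hT, hev, hlt⟩ := (isCPath_concat T c e l' u n).1 h2
          by_cases he : (e.2.2 : ℕ) < s
          · left
            refine (ih n _).2 ⟨h1, (isCPath_concat T c e l' u n).2 ⟨hpath, hT, hev, hlt⟩, ?_⟩
            intro f hf
            rcases List.mem_append.1 hf with hf | hf
            · have := hlt f hf
              rw [Fin.lt_def] at this
              omega
            · rw [List.mem_singleton.1 hf]
              exact he
          · right
            have hes : (e.2.2 : ℕ) = s := by
              have := h3 e (List.mem_append_right _ (List.mem_singleton_self e))
              omega
            have heq : e = (e.1, n, ⟨s, h⟩) := by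
              obtain ⟨e1, e2, e3⟩ := e
              simp only [Prod.mk.injEq, true_and]
              exact ⟨hev, Fin.ext hes⟩
            refine ⟨e.1, by rw [heq] at hT; exact hT, (u, l'), ?_, ?_⟩
            · refine (ih e.1 _).2 ⟨h1, hpath, ?_⟩
              intro f hf
              have := hlt f hf
              rw [Fin.lt_def] at this
              omega
            · rw [heq]
    · simp only [dif_neg h, Finset.notMem_empty, or_false]
      rw [ih n q]
      constructor
      · rintro ⟨h1, h2, h3⟩
        exact ⟨h1, h2, fun e he => Nat.lt_succ_of_lt (h3 e he)⟩
      · rintro ⟨h1, h2, h3⟩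
        refine ⟨h1, h2, fun e he => ?_⟩
        have h4 := h3 e he
        have h5 := e.2.2.isLt
        omega

lemma cnt_eq_card {G P S : ℕ} (pre : Set (Fin G × Fin P))
    (T : Finset (Fin G × Fin P × Fin P × Fin S)) (c : Fin G) :
    ∀ (s : ℕ) (n : Fin P), cntRun pre T s c n = (pathF pre T s c n).card := by
  intro s
  induction s with
  | zero =>
    intro n
    by_cases hp : (c, n) ∈ pre <;> simp [cntRun, pathF, hp]
  | succ s ih =>
    intro n
    show cntRun pre T s c n + _ = _
    simp only [pathF]
    by_cases h : s < S
    · simp only [dif_pos h]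
      have hdisj : Disjoint (pathF pre T s c n)
          ((Finset.univ.filter fun n' => (c, n', n, ⟨s, h⟩) ∈ T).biUnion fun n' =>
            (pathF pre T s c n').image fun q => (q.1, q.2 ++ [(n', n, ⟨s, h⟩)])) := by
        rw [Finset.disjoint_left]
        rintro q hq hq2
        obtain ⟨_, _, h3⟩ := (mem_pathF pre T c s n q).1 hq
        simp only [Finset.mem_biUnion, Finset.mem_image] at hq2
        obtain ⟨n', _, p, _, rfl⟩ := hq2
        have := h3 (n', n, ⟨s, h⟩) (List.mem_append_right _ (List.mem_singleton_self _))
        simp at this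
      have hpair : ∀ x ∈ Finset.univ.filter fun n' => (c, n', n, ⟨s, h⟩) ∈ T,
          ∀ y ∈ Finset.univ.filter fun n' => (c, n', n, ⟨s, h⟩) ∈ T, x ≠ y →
          Disjoint ((pathF pre T s c x).image fun q => (q.1, q.2 ++ [(x, n, ⟨s, h⟩)]))
            ((pathF pre T s c y).image fun q => (q.1, q.2 ++ [(y, n, ⟨s, h⟩)])) := by
        intro x _ y _ hne
        rw [Finset.disjoint_left]
        rintro q hq1 hq2
        simp only [Finset.mem_image] at hq1 hq2
        obtain ⟨p1, _, rfl⟩ := hq1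
        obtain ⟨p2, _, heq⟩ := hq2
        have h2 := congrArg (fun r : Fin P × List (Fin P × Fin P × Fin S) => r.2.getLast?) heq
        simp only [List.getLast?_concat, Option.some.injEq, Prod.mk.injEq] at h2
        exact hne h2.1.symm
      rw [Finset.card_union_of_disjoint hdisj, Finset.card_biUnion hpair]
      congr 1
      · exact ih n
      · rw [← Finset.sum_filter]
        refine Finset.sum_congr rfl fun n' hn' => ?_
        rw [ih n', Finset.card_image_of_injective]
        intro p1 p2 hp
        simp only [Prod.mk.injEq] at hp
        exact Prod.ext hp.1 (List.append_left_injective _ hp.2)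
    · simp only [dif_neg h, Finset.union_empty, add_zero, ih n]

lemma stepRun_iff {G P S : ℕ} (pre : Set (Fin G × Fin P))
    (T : Finset (Fin G × Fin P × Fin P × Fin S)) (c : Fin G) :
    ∀ (s : ℕ) (n : Fin P), (c, n) ∈ stepRun pre T s ↔ 1 ≤ cntRun pre T s c n := by
  intro s
  induction s with
  | zero =>
    intro n
    by_cases hp : (c, n) ∈ pre <;> simp [stepRun, cntRun, hp]
  | succ s ih =>
    intro n
    simp only [stepRun, cntRun, Set.mem_union, Set.mem_setOf_eq]
    rw [show (1 : ℕ) ≤ cntRun pre T s c n + _ ↔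
        1 ≤ cntRun pre T s c n ∨ 1 ≤ (if h : s < S then
          ∑ n' : Fin P, if (c, n', n, ⟨s, h⟩) ∈ T then cntRun pre T s c n' else 0 else 0) by
      omega]
    rw [← ih n]
    refine or_congr Iff.rfl ?_
    by_cases h : s < S
    · simp only [dif_pos h]
      rw [Nat.one_le_iff_ne_zero, Ne, Finset.sum_eq_zero_iff]
      push_neg
      constructor
      · rintro ⟨n', hn', h', hT⟩
        exact ⟨n', Finset.mem_univ _, by
          rw [if_pos hT]
          exact Nat.one_le_iff_ne_zero.1 ((ih n').1 hn')⟩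
      · rintro ⟨n', _, hne⟩
        by_cases hT : (c, n', n, ⟨s, h⟩) ∈ T
        · rw [if_pos hT] at hne
          exact ⟨n', (ih n').2 (Nat.one_le_iff_ne_zero.2 hne), h, hT⟩
        · rw [if_neg hT] at hne
          exact absurd rfl hne
    · simp only [dif_neg h]
      constructor
      · rintro ⟨n', _, h', _⟩
        exact absurd h' h
      · intro h1
        omega

/-- `cnt_S(c,n)` equals the number of pairs `(u, π)` with `(c,u) ∈ pre` and `π` a `c`-path
in `T` from `u` to `n` all of whose steps are `< S`; and `(c,n) ∈ V_S` iff `cnt_S(c,n) ≥ 1`. -/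
theorem cnt_eq_paths {G P S : ℕ} (hG : 1 ≤ G) (hP : 1 ≤ P)
    (pre : Set (Fin G × Fin P)) (T : Finset (Fin G × Fin P × Fin P × Fin S))
    (c : Fin G) (n : Fin P) :
    cntRun pre T S c n =
      {q : Fin P × List (Fin P × Fin P × Fin S) |
        (c, q.1) ∈ pre ∧ IsCPath T c q.1 n q.2 ∧ ∀ e ∈ q.2, (e.2.2 : ℕ) < S}.ncard ∧
    ((c, n) ∈ stepRun pre T S ↔ 1 ≤ cntRun pre T S c n) := by
  constructor
  · have hset : {q : Fin P × List (Fin P × Fin P × Fin S) |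
        (c, q.1) ∈ pre ∧ IsCPath T c q.1 n q.2 ∧ ∀ e ∈ q.2, (e.2.2 : ℕ) < S} =
        ↑(pathF pre T S c n) := by
      ext q
      simp [mem_pathF pre T c S n q]
    rw [hset, Set.ncard_coe_finset, cnt_eq_card]
  · exact stepRun_iff pre T c S n
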